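/- Let p be a positive integer and let n_1,…,n_p be positive integers. Then there exists an element x of the C*-algebra M = M_{n_1}(ℂ) ⊕ ⋯ ⊕ M_{n_p}(ℂ) such that the unital *-subalgebra of M generated by x is all of M. -/

import Mathlib

/-- The finite-dimensional C*-algebra `M = M_{n_1}(ℂ) ⊕ ⋯ ⊕ M_{n_p}(ℂ)`. -/
abbrev NA {p : ℕ} (n : Fin p → ℕ) := ∀ j : Fin p, Matrix (Fin (n j)) (Fin (n j)) ℂ

open Matrix Polynomial
open Fin.NatCast

/-- weighted cyclic shift matrix -/
def cyc {m : ℕ} [NeZero m] (c : Fin m → ℂ) : Matrix (Fin m) (Fin m) ℂ :=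
  Matrix.of fun k l => if l = k + 1 then c k else 0

lemma cyc_apply_succ {m : ℕ} [NeZero m] (c : Fin m → ℂ) (k : Fin m) :
    cyc c k (k + 1) = c k := by simp [cyc]

lemma cyc_conjTranspose_mul {m : ℕ} [NeZero m] (c : Fin m → ℂ) :
    (cyc c)ᴴ * cyc c = Matrix.diagonal (fun k => star (c (k - 1)) * c (k - 1)) := by
  ext k l
  have hiff : ∀ (a i : Fin m), (a = i + 1) ↔ (i = a - 1) := by
    intro a i
    constructor
    · rintro rfl; simp
    · rintro rfl; simp
  simp only [Matrix.mul_apply, Matrix.conjTranspose_apply, cyc, Matrix.of_apply]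
  simp only [hiff, apply_ite, star_zero, ite_mul, zero_mul, mul_ite, mul_zero]
  rw [Finset.sum_ite_eq' Finset.univ (l - 1)
    (fun i => if i = k - 1 then star (c i) * c i else 0)]
  simp only [Finset.mem_univ, if_true, Matrix.diagonal_apply]
  by_cases h : k = l
  · subst h; simp
  · have h' : ¬ (l - 1 = k - 1) := by
      intro hc
      exact h (sub_left_inj.mp hc).symm
    simp [h, h']

lemma stdBasis_mul_mul {m' : Type*} [Fintype m'] [DecidableEq m']
    (M : Matrix m' m' ℂ) (k l : m') :
    Matrix.single k k (1 : ℂ) * M * Matrix.single l l 1 = M k l • Matrix.single k l 1 := by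
  ext a b
  by_cases ha : a = k
  · subst ha
    by_cases hb : b = l
    · subst hb; simp [mul_assoc]
    · simp [mul_assoc, hb, Ne.symm hb]
  · simp [mul_assoc, ha, Ne.symm ha]

lemma aeval_mem_subalgebra {R B : Type*} [CommSemiring R] [Semiring B] [Algebra R B]
    (S : Subalgebra R B) {a : B} (h : a ∈ S) (q : R[X]) : aeval a q ∈ S := by
  have := (Polynomial.aeval (⟨a, h⟩ : S) q).2
  rwa [Polynomial.aeval_subalgebra_coe] at this

/-- The Lagrange-interpolation step: if a subalgebra of `NA n` contains a "diagonal"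
element with globally distinct diagonal entries, it contains all the diagonal
matrix units. -/
lemma diag_units_mem {p : ℕ} {n : Fin p → ℕ} (A : Subalgebra ℂ (NA n))
    (w : ∀ j, Fin (n j) → ℂ)
    (hw : Function.Injective (fun i : Σ j : Fin p, Fin (n j) => w i.1 i.2))
    (hd : (fun j => Matrix.diagonal (w j) : NA n) ∈ A) (j : Fin p) (k : Fin (n j)) :
    (Pi.single j (Matrix.single k k (1 : ℂ)) : NA n) ∈ A := by
  classical
  set v : (Σ j : Fin p, Fin (n j)) → ℂ := fun i => w i.1 i.2 with hv
  set q : ℂ[X] := Lagrange.basis Finset.univ v ⟨j, k⟩ with hq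
  set d : NA n := fun j => Matrix.diagonal (w j) with hdd
  have hmem : aeval d q ∈ A := aeval_mem_subalgebra A hd q
  have heq : (Pi.single j (Matrix.single k k (1 : ℂ)) : NA n) = aeval d q := by
    funext j'
    have h1 : (aeval d q) j' = aeval (d j') q :=
      (Polynomial.aeval_algHom_apply (Pi.evalAlgHom ℂ _ j') d q).symm
    have h2 : aeval (d j') q = Matrix.diagonal (fun k' => Polynomial.eval (w j' k') q) := by
      have hstep : aeval ((Matrix.diagonalAlgHom ℂ) (w j')) q
          = (Matrix.diagonalAlgHom ℂ) (aeval (w j') q) :=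
        Polynomial.aeval_algHom_apply (Matrix.diagonalAlgHom ℂ) (w j') q
      have hd' : d j' = (Matrix.diagonalAlgHom ℂ) (w j') := rfl
      rw [hd', hstep, Matrix.diagonalAlgHom_apply]
      have hfn : (aeval (w j') q : Fin (n j') → ℂ) = fun k' => Polynomial.eval (w j' k') q := by
        funext k'
        rw [Polynomial.aeval_fn_apply]
        simp
      rw [hfn]
    have h3a : ∀ k' : Fin (n j), Polynomial.eval (w j k') q = if k' = k then 1 else 0 := by
      intro k'
      by_cases hk : k' = k
      · subst hk
        rw [if_pos rfl]
        have hvv : w j k' = v ⟨j, k'⟩ := rfl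
        rw [hvv, hq]
        exact Lagrange.eval_basis_self (fun a _ b _ h => hw h) (Finset.mem_univ _)
      · rw [if_neg hk]
        have hvv : w j k' = v ⟨j, k'⟩ := rfl
        rw [hvv, hq]
        refine Lagrange.eval_basis_of_ne ?_ (Finset.mem_univ _)
        intro hc
        obtain ⟨-, h5⟩ := Sigma.mk.inj_iff.mp hc
        exact hk (eq_of_heq h5).symm
    have h3b : ∀ (j'' : Fin p), j'' ≠ j → ∀ k' : Fin (n j''),
        Polynomial.eval (w j'' k') q = 0 := by
      intro j'' hj k'
      have hvv : w j'' k' = v ⟨j'', k'⟩ := rfl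
      rw [hvv, hq]
      refine Lagrange.eval_basis_of_ne ?_ (Finset.mem_univ _)
      intro hc
      exact hj (congrArg Sigma.fst hc).symm
    rw [h1, h2]
    by_cases hj : j' = j
    · subst hj
      have hfn : (fun k' => Polynomial.eval (w j' k') q) = fun k' => if k' = k then (1:ℂ) else 0 :=
        funext h3a
      rw [Pi.single_eq_same, hfn]
      ext a b
      by_cases ha : a = k
      · subst ha
        by_cases hb : b = a
        · subst hb; simp
        · simp [Matrix.diagonal_apply, hb, Ne.symm hb]
      · by_cases hb : a = b
        · subst hb
          simp [Matrix.diagonal_apply, ha, Ne.symm ha]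
        · simp [Matrix.diagonal_apply, ha, hb, Ne.symm ha]
    · have hfn : (fun k' => Polynomial.eval (w j' k') q) = fun _ => (0 : ℂ) :=
        funext (h3b j' hj)
      rw [Pi.single_eq_of_ne hj, hfn]
      simp
  rw [heq]; exact hmem

/-- Lemma 5.1: `M_{n_1}(ℂ) ⊕ ⋯ ⊕ M_{n_p}(ℂ)` is singly
generated: there is an element `x` whose generated unital *-subalgebra is all
of `M`. -/
theorem stmt_7 (p : ℕ) (hp : 0 < p) (n : Fin p → ℕ) (hn : ∀ j, 0 < n j) :
    ∃ x : NA n, StarAlgebra.adjoin ℂ ({x} : Set (NA n)) = ⊤ := by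
  classical
  haveI : ∀ j, NeZero (n j) := fun j => ⟨(hn j).ne'⟩
  set ι := (Σ j : Fin p, Fin (n j)) with hι
  let e : ι ≃ Fin (Fintype.card ι) := Fintype.equivFin ι
  let c : ∀ j, Fin (n j) → ℂ := fun j k => ((Real.sqrt ((e ⟨j, k⟩ : ℕ) + 1) : ℝ) : ℂ)
  have hc_sq : ∀ j k, star (c j k) * c j k = (((e ⟨j, k⟩ : ℕ) + 1 : ℝ) : ℂ) := by
    intro j k
    have h0 : (0 : ℝ) ≤ (e ⟨j, k⟩ : ℕ) + 1 := by positivity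
    simp only [c]
    rw [Complex.star_def, Complex.conj_ofReal, ← Complex.ofReal_mul,
      Real.mul_self_sqrt h0]
  have hc_ne : ∀ j k, c j k ≠ 0 := by
    intro j k
    simp only [c, ne_eq, Complex.ofReal_eq_zero]
    positivity
  set x : NA n := fun j => cyc (c j) with hx
  refine ⟨x, ?_⟩
  set A := StarAlgebra.adjoin ℂ ({x} : Set (NA n)) with hA
  have hxA : x ∈ A := StarAlgebra.self_mem_adjoin_singleton ℂ x
  -- the diagonal element with distinct entries
  set w : ∀ j, Fin (n j) → ℂ := fun j k => star (c j (k - 1)) * c j (k - 1) with hwdef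
  have hdiag : star x * x = (fun j => Matrix.diagonal (w j) : NA n) := by
    funext j
    have : (star x * x) j = (x j)ᴴ * x j := rfl
    rw [this, hx, cyc_conjTranspose_mul]
  have hd : (fun j => Matrix.diagonal (w j) : NA n) ∈ A := by
    rw [← hdiag]; exact mul_mem (star_mem hxA) hxA
  have hw : Function.Injective (fun i : ι => w i.1 i.2) := by
    intro i i' h
    simp only [hwdef, hc_sq] at h
    have h2 : ((e ⟨i.1, i.2 - 1⟩ : ℕ) : ℝ) = ((e ⟨i'.1, i'.2 - 1⟩ : ℕ) : ℝ) := by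
      have := Complex.ofReal_injective h
      linarith
    have h3 : e ⟨i.1, i.2 - 1⟩ = e ⟨i'.1, i'.2 - 1⟩ :=
      Fin.val_injective (Nat.cast_injective h2)
    have h4 : (⟨i.1, i.2 - 1⟩ : ι) = ⟨i'.1, i'.2 - 1⟩ := e.injective h3
    obtain ⟨j1, k1⟩ := i
    obtain ⟨j2, k2⟩ := i'
    obtain ⟨rfl, h5⟩ := Sigma.mk.inj_iff.mp h4
    have h6 : k1 - 1 = k2 - 1 := eq_of_heq h5
    have : k1 = k2 := by
      have := congrArg (· + 1) h6
      simpa using this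
    simp [this]
  -- all diagonal matrix units are in A
  have hkk : ∀ (j : Fin p) (k : Fin (n j)),
      (Pi.single j (Matrix.single k k (1 : ℂ)) : NA n) ∈ A := by
    intro j k
    have := diag_units_mem A.toSubalgebra w hw (by rwa [StarSubalgebra.mem_toSubalgebra]) j k
    rwa [StarSubalgebra.mem_toSubalgebra] at this
  -- all matrix units are in A
  have hall : ∀ (j : Fin p) (k l : Fin (n j)),
      (Pi.single j (Matrix.single k l (1 : ℂ)) : NA n) ∈ A := by
    intro j
    have hsup : ∀ k : Fin (n j),
        (Pi.single j (Matrix.single k (k + 1) (1 : ℂ)) : NA n) ∈ A := by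
      intro k
      have h1 : (Pi.single j (Matrix.single k k (1 : ℂ)) : NA n) * x *
          Pi.single j (Matrix.single (k + 1) (k + 1) (1 : ℂ)) ∈ A :=
        mul_mem (mul_mem (hkk j k) hxA) (hkk j (k + 1))
      have h2 : (Pi.single j (Matrix.single k k (1 : ℂ)) : NA n) * x *
          Pi.single j (Matrix.single (k + 1) (k + 1) (1 : ℂ)) =
          c j k • (Pi.single j (Matrix.single k (k + 1) (1 : ℂ)) : NA n) := by
        funext j'
        simp only [Pi.mul_apply, Pi.smul_apply]
        by_cases hj : j' = j
        · subst hj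
          rw [Pi.single_eq_same, Pi.single_eq_same, Pi.single_eq_same, stdBasis_mul_mul]
          have hxv : x j' k (k + 1) = c j' k := cyc_apply_succ (c j') k
          rw [hxv]
        · rw [Pi.single_eq_of_ne hj, Pi.single_eq_of_ne hj, Pi.single_eq_of_ne hj]
          simp
      have h3 := SMulMemClass.smul_mem (c j k)⁻¹ h1
      rw [h2, smul_smul, inv_mul_cancel₀ (hc_ne j k), one_smul] at h3
      exact h3
    have hstep : ∀ (m : ℕ) (k : Fin (n j)),
        (Pi.single j (Matrix.single k (k + (m : Fin (n j))) (1 : ℂ)) : NA n) ∈ A := by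
      intro m
      induction m with
      | zero => simpa using hkk j
      | succ m ih =>
        intro k
        have h1 := mul_mem (ih k) (hsup (k + (m : Fin (n j))))
        have h2 : (Pi.single j (Matrix.single k (k + (m : Fin (n j))) (1 : ℂ)) : NA n) *
            Pi.single j (Matrix.single (k + (m : Fin (n j)))
              (k + (m : Fin (n j)) + 1) (1 : ℂ)) =
            Pi.single j (Matrix.single k (k + ((m + 1 : ℕ) : Fin (n j))) (1 : ℂ)) := by
          rw [← Pi.single_mul, Matrix.single_mul_single_same, one_mul]
          congr 1
          rw [Nat.cast_add, Nat.cast_one, add_assoc]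
        rwa [h2] at h1
    intro k l
    have h1 := hstep (l - k).val k
    rwa [Fin.cast_val_eq_self, add_sub_cancel] at h1
  -- conclude
  rw [eq_top_iff]
  intro y _
  have hy : y = ∑ j, Pi.single j (y j) := (Finset.univ_sum_single y).symm
  rw [hy]
  refine sum_mem fun j _ => ?_
  have hyj : (Pi.single j (y j) : NA n) =
      ∑ k, ∑ l, (y j k l) • (Pi.single j (Matrix.single k l (1 : ℂ)) : NA n) := by
    have h0 : ∀ M : Matrix (Fin (n j)) (Fin (n j)) ℂ, (Pi.single j M : NA n) =
        (LinearMap.single ℂ (fun j => Matrix (Fin (n j)) (Fin (n j)) ℂ) j) M := fun _ => rfl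
    rw [h0, Matrix.matrix_eq_sum_single (y j), map_sum]
    refine Finset.sum_congr rfl fun k _ => ?_
    rw [map_sum]
    refine Finset.sum_congr rfl fun l _ => ?_
    rw [← h0, ← Pi.single_smul, Matrix.smul_single, smul_eq_mul, mul_one,
      ← Matrix.matrix_eq_sum_single]
  rw [hyj]
  exact sum_mem fun k _ => sum_mem fun l _ => SMulMemClass.smul_mem _ (hall j k l)
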